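/- Let G = B × A where B is elementary abelian p-group (Z_p)^r and A = Z_{p^{α_{r+1}}} × ⋯ × Z_{p^{α_k}} with all α_i ≥ 2. Then a proper subgroup H of G is isolated in G if and only if H ∩ A = 1 (identifying A with the subgroup 1 × A of G). -/

import Mathlib

theorem zmod_root {p n : ℕ} (hp : p.Prime) (hn : 2 ≤ n) (a : ZMod (p^n))
    (h : (p : ZMod (p^n)) * a = 0) : ∃ b : ZMod (p^n), (p : ZMod (p^n)) * b = a := by
  have hne : NeZero (p^n) := ⟨pow_ne_zero n hp.pos.ne'⟩
  have ha : ((a.val : ℕ) : ZMod (p^n)) = a := ZMod.natCast_zmod_val a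
  have h2 : ((p * a.val : ℕ) : ZMod (p^n)) = 0 := by push_cast [ha]; exact h
  rw [ZMod.natCast_eq_zero_iff] at h2
  obtain ⟨c, hc⟩ := h2
  have hpn : p ^ n = p * p ^ (n - 1) := by rw [← pow_succ']; congr 1; omega
  have hd : a.val = p ^ (n - 1) * c :=
    Nat.eq_of_mul_eq_mul_left hp.pos (by rw [hc, hpn, mul_assoc])
  refine ⟨((p ^ (n - 2) * c : ℕ) : ZMod (p^n)), ?_⟩
  rw [← ha, hd, ← Nat.cast_mul]
  congr 1
  rw [← mul_assoc, ← pow_succ']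
  congr 2
  omega

/-- `H` is isolated in `G`: every `x ∈ G` is in `H` or `⟨x⟩ ∩ H = 1`. -/
def Subgroup.IsIsolated {G : Type*} [Group G] (H : Subgroup G) : Prop :=
  ∀ x : G, x ∈ H ∨ Subgroup.zpowers x ⊓ H = ⊥

/-- `o_H(x)`: the smallest positive `m` with `x ^ m ∈ H`. -/
noncomputable def relOrder {G : Type*} [Group G] (H : Subgroup G) (x : G) : ℕ :=
  sInf {m : ℕ | 0 < m ∧ x ^ m ∈ H}

/-- `ψ(G)`: the sum of the orders of the elements of `G`. -/
noncomputable def psi (G : Type*) [Group G] [Fintype G] : ℕ :=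
  ∑ x : G, orderOf x

theorem stmt9 {p : ℕ} [Fact p.Prime] {r s : ℕ} (α : Fin s → ℕ) (hα : ∀ i, 2 ≤ α i)
    (H : Subgroup ((Fin r → Multiplicative (ZMod p)) ×
      (∀ i, Multiplicative (ZMod (p ^ α i)))))
    (hne : H ≠ ⊤) :
    H.IsIsolated ↔ H ⊓ Subgroup.prod ⊥ ⊤ = ⊥ := by
  have hp : p.Prime := Fact.out
  set G := (Fin r → Multiplicative (ZMod p)) × (∀ i, Multiplicative (ZMod (p ^ α i))) with hGdef
  have hpg : IsPGroup p G := by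
    apply IsPGroup.of_card (n := r + ∑ i, α i)
    rw [Nat.card_eq_fintype_card, Fintype.card_prod, Fintype.card_pi, Fintype.card_pi]
    simp only [Fintype.card_multiplicative, ZMod.card]
    rw [Finset.prod_const, Finset.prod_pow_eq_pow_sum, pow_add, Finset.card_univ,
      Fintype.card_fin]
  have hord : ∀ g : G, ∃ k, orderOf g = p ^ k := IsPGroup.iff_orderOf.mp hpg
  constructor
  · -- isolated → H ⊓ A = ⊥
    intro hiso
    by_contra hbot
    obtain ⟨⟨z, hz⟩, hz1⟩ := Subgroup.ne_bot_iff_exists_ne_one.mp hbot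
    simp only [ne_eq, Subgroup.mk_eq_one] at hz1
    obtain ⟨hzH, hzA⟩ := hz
    obtain ⟨k, hk⟩ := hord z
    have hk0 : k ≠ 0 := by
      rintro rfl
      exact hz1 (orderOf_eq_one_iff.mp (by simpa using hk))
    set z' : G := z ^ (p ^ (k - 1)) with hz'
    have hz'1 : z' ≠ 1 := by
      intro h
      have h2 := orderOf_dvd_of_pow_eq_one h
      rw [hk] at h2
      have := (Nat.pow_dvd_pow_iff_le_right hp.one_lt).mp h2
      omega
    have hz'p : z' ^ p = 1 := by
      rw [hz', ← pow_mul, ← pow_succ]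
      have h3 : k - 1 + 1 = k := by omega
      rw [h3, ← hk, pow_orderOf_eq_one]
    have hz'H : z' ∈ H := H.pow_mem hzH (p ^ (k - 1))
    have hz'A : z' ∈ Subgroup.prod (⊥ : Subgroup (Fin r → Multiplicative (ZMod p))) ⊤ :=
      Subgroup.pow_mem _ hzA (p ^ (k - 1))
    have hz'fst : z'.1 = 1 := by
      have := (Subgroup.mem_prod.mp hz'A).1
      simpa using this
    have hcomp : ∀ i, (z'.2 i) ^ p = 1 := by
      intro i
      have h4 : (z' ^ p).2 i = 1 := by rw [hz'p]; rfl
      exact h4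
    have hroot : ∀ i, ∃ b : Multiplicative (ZMod (p ^ α i)), b ^ p = z'.2 i := by
      intro i
      have h1 : (p : ZMod (p ^ α i)) * (Multiplicative.toAdd (z'.2 i)) = 0 := by
        have h2 : Multiplicative.toAdd ((z'.2 i) ^ p) = (0 : ZMod (p ^ α i)) := by
          rw [hcomp i]; rfl
        rw [toAdd_pow] at h2
        rwa [← nsmul_eq_mul]
      obtain ⟨b, hb⟩ := zmod_root hp (hα i) _ h1
      refine ⟨Multiplicative.ofAdd b, ?_⟩
      rw [← ofAdd_nsmul, nsmul_eq_mul, hb, ofAdd_toAdd]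
    choose b hb using hroot
    set w : G := (1, b) with hw
    have hwp : w ^ p = z' := by
      have h1 : (w ^ p).1 = z'.1 := by
        rw [Prod.pow_fst, hz'fst, hw]
        exact one_pow p
      have h2 : (w ^ p).2 = z'.2 := funext fun i => by
        rw [Prod.pow_snd, Pi.pow_apply]
        exact hb i
      exact Prod.ext h1 h2
    obtain ⟨x, hx⟩ : ∃ x : G, x ∉ H := by
      by_contra h
      push_neg at h
      exact hne ((Subgroup.eq_top_iff' H).mpr h)
    have hZ : Subgroup.zpowers x ⊓ H = ⊥ := (hiso x).resolve_left hx
    obtain ⟨t, ht⟩ := hord x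
    have ht0 : t ≠ 0 := by
      rintro rfl
      exact hx (orderOf_eq_one_iff.mp (by simpa using ht) ▸ H.one_mem)
    set c : G := x ^ (p ^ (t - 1)) with hc
    have hc1 : c ≠ 1 := by
      intro h
      have h2 := orderOf_dvd_of_pow_eq_one h
      rw [ht] at h2
      have := (Nat.pow_dvd_pow_iff_le_right hp.one_lt).mp h2
      omega
    have hcp : c ^ p = 1 := by
      rw [hc, ← pow_mul, ← pow_succ]
      have h3 : t - 1 + 1 = t := by omega
      rw [h3, ← ht, pow_orderOf_eq_one]
    have hcH : c ∉ H := by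
      intro h
      have h5 : c ∈ Subgroup.zpowers x ⊓ H :=
        ⟨Subgroup.pow_mem _ (Subgroup.mem_zpowers x) _, h⟩
      rw [hZ] at h5
      exact hc1 h5
    set y : G := c * w with hy
    have hyp : y ^ p = z' := by rw [hy, mul_pow, hcp, hwp, one_mul]
    have hyH : y ∈ H := by
      rcases hiso y with h | h
      · exact h
      · exfalso
        have h6 : z' ∈ Subgroup.zpowers y ⊓ H := by
          refine ⟨?_, hz'H⟩
          rw [← hyp]
          exact Subgroup.pow_mem _ (Subgroup.mem_zpowers y) _
        rw [h] at h6
        exact hz'1 h6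
    rcases hiso w with h | h
    · refine hcH ?_
      have h7 : y * w⁻¹ ∈ H := H.mul_mem hyH (H.inv_mem h)
      rwa [hy, mul_inv_cancel_right] at h7
    · have h8 : z' ∈ Subgroup.zpowers w ⊓ H := by
        refine ⟨?_, hz'H⟩
        rw [← hwp]
        exact Subgroup.pow_mem _ (Subgroup.mem_zpowers w) _
      rw [h] at h8
      exact hz'1 h8
  · -- H ⊓ A = ⊥ → isolated
    intro hint x
    by_cases hxH : x ∈ H
    · exact Or.inl hxH
    right
    rw [eq_bot_iff]
    intro g hg
    obtain ⟨hgx, hgH⟩ := hg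
    obtain ⟨m, hm0⟩ := mem_powers_iff_mem_zpowers.mpr hgx
    have hm : x ^ m = g := hm0
    clear hm0
    by_cases hpm : p ∣ m
    · obtain ⟨e, rfl⟩ := hpm
      have key : ∀ u : Multiplicative (ZMod p), u ^ p = 1 := fun u => by
        have h0 : ((p : ℕ) • Multiplicative.toAdd u) = (0 : ZMod p) := by
          rw [nsmul_eq_mul, ZMod.natCast_self, zero_mul]
        calc u ^ p = Multiplicative.ofAdd ((p : ℕ) • Multiplicative.toAdd u) := by
              rw [ofAdd_nsmul, ofAdd_toAdd]
          _ = 1 := by rw [h0, ofAdd_zero]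
      have hxp : x ^ p ∈ Subgroup.prod (⊥ : Subgroup (Fin r → Multiplicative (ZMod p))) ⊤ := by
        rw [Subgroup.mem_prod]
        refine ⟨?_, trivial⟩
        rw [Subgroup.mem_bot, Prod.pow_fst]
        funext j
        exact key (x.1 j)
      have h9 : g ∈ H ⊓ Subgroup.prod ⊥ ⊤ := by
        refine ⟨hgH, ?_⟩
        rw [← hm, pow_mul]
        exact Subgroup.pow_mem _ hxp e
      rw [hint] at h9
      exact h9
    · exfalso
      obtain ⟨t, ht⟩ := hord x
      have hx1 : x ≠ 1 := fun h => hxH (h ▸ H.one_mem)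
      have h1 : 0 < orderOf x := orderOf_pos x
      have h2 : orderOf x ≠ 1 := fun h => hx1 (orderOf_eq_one_iff.mp h)
      have hord1 : 1 < orderOf x := by omega
      have hcop : Nat.Coprime m (orderOf x) := by
        rw [ht]
        exact Nat.Coprime.pow_right t (hp.coprime_iff_not_dvd.mpr hpm).symm
      obtain ⟨cc, -, hcc⟩ := Nat.exists_mul_mod_eq_one_of_coprime hcop hord1
      have hdiv : m * cc = orderOf x * (m * cc / orderOf x) + 1 := by
        conv_lhs => rw [← Nat.div_add_mod (m * cc) (orderOf x)]
        rw [hcc]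
      have hone : x ^ orderOf x = 1 := pow_orderOf_eq_one x
      have hxm : x ^ (m * cc) = x := by
        rw [hdiv, pow_add, pow_mul, hone, one_pow, one_mul, pow_one]
      have hxg : x = g ^ cc := by rw [← hm, ← pow_mul, hxm]
      exact hxH (hxg ▸ H.pow_mem hgH cc)
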